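/- Let a be an odd natural number. Then Σ_{j=0}^{a} Σ_{i=1}^{n} (1/n^a) · binomial(a,j) · (−1)^j · n^j · (i − 1/2)^{a−j} · i^{\overline{j}} / (n+1)^{\overline{j}} = O(1/n^{(a−1)/2}) as n → ∞. -/

import Mathlib

open Filter Asymptotics Finset

noncomputable def risingFac (x : ℝ) (k : ℕ) : ℝ := ∏ j ∈ Finset.range k, (x + j)

lemma rf_zero (x : ℝ) : risingFac x 0 = 1 := by simp [risingFac]

lemma rf_succ (x : ℝ) (k : ℕ) : risingFac x (k+1) = risingFac x k * (x + k) := by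
  simp [risingFac, Finset.prod_range_succ]

lemma rf_succ' (x : ℝ) (k : ℕ) : risingFac x (k+1) = x * risingFac (x+1) k := by
  rw [risingFac, Finset.prod_range_succ']
  simp only [Nat.cast_zero, add_zero, mul_comm]
  congr 1
  apply Finset.prod_congr rfl
  intro i _
  push_cast
  ring

lemma rf_add (x : ℝ) (j m : ℕ) :
    risingFac x (j + m) = risingFac x j * risingFac (x + j) m := by
  induction m with
  | zero => simp [rf_zero]
  | succ m ih =>
    have : j + (m+1) = (j+m) + 1 := by omega
    rw [this, rf_succ, ih, rf_succ]
    push_cast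
    ring

lemma rf_pos {x : ℝ} (hx : 0 < x) (k : ℕ) : 0 < risingFac x k := by
  apply Finset.prod_pos
  intro j _
  exact add_pos_of_pos_of_nonneg hx (Nat.cast_nonneg j)

noncomputable def LL (m : ℕ) (A t x c : ℝ) : ℝ :=
  ∑ j ∈ Finset.range (m+1),
    (m.choose j : ℝ) * (A^(m-j) * t^j * risingFac x j * risingFac (c + j) (m - j))

lemma pascalSplit (m : ℕ) (X : ℕ → ℝ) :
    ∑ j ∈ Finset.range (m+2), ((m+1).choose j : ℝ) * X j
    = ∑ j ∈ Finset.range (m+1), (m.choose j : ℝ) * X j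
      + ∑ j ∈ Finset.range (m+1), (m.choose j : ℝ) * X (j+1) := by
  rw [Finset.sum_range_succ' (fun j => ((m+1).choose j : ℝ) * X j) (m+1)]
  have h1 : ∀ j, (((m+1).choose (j+1) : ℕ) : ℝ) = (m.choose j : ℝ) + (m.choose (j+1) : ℝ) := by
    intro j
    rw [Nat.choose_succ_succ]
    push_cast
    ring
  have h2 : ∑ j ∈ Finset.range (m+1), (((m+1).choose (j+1) : ℕ) : ℝ) * X (j+1)
      = ∑ j ∈ Finset.range (m+1), (m.choose j : ℝ) * X (j+1)
        + ∑ j ∈ Finset.range (m+1), (m.choose (j+1) : ℝ) * X (j+1) := by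
    rw [← Finset.sum_add_distrib]
    apply Finset.sum_congr rfl
    intro j _
    rw [h1]
    ring
  rw [h2]
  have h3 : ∑ j ∈ Finset.range (m+1), (m.choose (j+1) : ℝ) * X (j+1)
      + ((m+1).choose 0 : ℝ) * X 0 = ∑ j ∈ Finset.range (m+1), (m.choose j : ℝ) * X j := by
    have h4 : ∑ j ∈ Finset.range (m+2), (m.choose j : ℝ) * X j
        = ∑ j ∈ Finset.range (m+1), (m.choose (j+1) : ℝ) * X (j+1)
          + (m.choose 0 : ℝ) * X 0 :=
      Finset.sum_range_succ' (fun j => (m.choose j : ℝ) * X j) (m+1)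
    rw [Finset.sum_range_succ] at h4
    simp only [Nat.choose_succ_self, Nat.cast_zero, zero_mul, add_zero, Nat.choose_zero_right,
      Nat.cast_one] at h4 ⊢
    linarith
  linarith

lemma CR (m : ℕ) (A t x c : ℝ) :
    x * LL m A t (x+1) (c+1) + (c - x) * LL m A t x (c+1) = (c + m) * LL m A t x c := by
  unfold LL
  rw [Finset.mul_sum, Finset.mul_sum, Finset.mul_sum, ← Finset.sum_add_distrib]
  apply Finset.sum_congr rfl
  intro j hj
  have hjm : j ≤ m := Nat.lt_succ_iff.mp (Finset.mem_range.mp hj)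
  have h1 : x * risingFac (x+1) j = risingFac x j * (x + j) := by
    rw [← rf_succ', rf_succ]
  have e : ((c:ℝ)+1) + (j:ℝ) = (c + (j:ℝ)) + 1 := by ring
  rw [e]
  have h2 : (c + (j:ℝ)) * risingFac ((c + (j:ℝ)) + 1) (m-j)
      = risingFac (c + (j:ℝ)) (m-j) * (c + (m:ℝ)) := by
    rw [← rf_succ', rf_succ, Nat.cast_sub hjm]
    ring
  linear_combination ((m.choose j : ℝ) * A^(m-j) * t^j * risingFac ((c + (j:ℝ)) + 1) (m-j)) * h1
    + ((m.choose j : ℝ) * A^(m-j) * t^j * risingFac x j) * h2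

lemma REC (m : ℕ) (A t x c : ℝ) :
    LL (m+1) A t x c = A * (c + m) * LL m A t x c + t * x * LL m A t (x+1) (c+1) := by
  unfold LL
  rw [pascalSplit m (fun j => A^(m+1-j) * t^j * risingFac x j * risingFac (c + j) (m+1-j))]
  congr 1
  · rw [Finset.mul_sum]
    apply Finset.sum_congr rfl
    intro j hj
    have hjm : j ≤ m := Nat.lt_succ_iff.mp (Finset.mem_range.mp hj)
    have e1 : m + 1 - j = (m - j) + 1 := by omega
    rw [e1, pow_succ, rf_succ, Nat.cast_sub hjm]
    ring
  · rw [Finset.mul_sum]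
    apply Finset.sum_congr rfl
    intro j hj
    have e1 : m + 1 - (j+1) = m - j := by omega
    have e2 : (c:ℝ) + ((j:ℕ)+1 : ℕ) = (c+1) + (j:ℝ) := by push_cast; ring
    rw [e1, e2, pow_succ, rf_succ']
    ring

lemma GP (a : ℕ) : ∀ (A t x c : ℝ), LL a A t x c = LL a (A+t) (-t) (c-x) c := by
  induction a with
  | zero => intro A t x c; simp [LL, rf_zero]
  | succ m ih =>
    intro A t x c
    rw [REC, REC]
    rw [← ih A t x c]
    have e : (c - x) + 1 = (c + 1) - x := by ring
    rw [e, ← ih A t x (c+1)]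
    linear_combination t * CR m A t x c

lemma sum_eq_LL_div (a : ℕ) (ν : ℝ) (hν : 0 ≤ ν) (x : ℝ) :
    ∑ j ∈ Finset.range (a+1),
        (a.choose j : ℝ) * (-1)^j * ν^j * (x - 1/2)^(a-j) * risingFac x j / risingFac (ν+1) j
    = LL a (x - 1/2) (-ν) x (ν+1) / risingFac (ν+1) a := by
  unfold LL
  rw [Finset.sum_div]
  apply Finset.sum_congr rfl
  intro j hj
  have hja : j ≤ a := Nat.lt_succ_iff.mp (Finset.mem_range.mp hj)
  have hsplit : risingFac (ν+1) a = risingFac (ν+1) j * risingFac ((ν+1) + j) (a-j) := by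
    rw [← rf_add, Nat.add_sub_cancel' hja]
  have h1 : risingFac (ν+1) j ≠ 0 := ne_of_gt (rf_pos (by linarith) j)
  have h2 : risingFac ((ν+1) + (j:ℝ)) (a-j) ≠ 0 := by
    apply ne_of_gt
    apply rf_pos
    have : (0:ℝ) ≤ (j:ℝ) := Nat.cast_nonneg j
    linarith
  rw [hsplit]
  field_simp
  ring

lemma g_antisym (a : ℕ) (ha : Odd a) (ν : ℝ) (hν : 0 ≤ ν) (x : ℝ) :
    (∑ j ∈ Finset.range (a+1),
        (a.choose j : ℝ) * (-1)^j * ν^j * (x - 1/2)^(a-j) * risingFac x j / risingFac (ν+1) j)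
    + (∑ j ∈ Finset.range (a+1),
        (a.choose j : ℝ) * (-1)^j * ν^j * ((ν+1-x) - 1/2)^(a-j) * risingFac (ν+1-x) j
          / risingFac (ν+1) j) = 0 := by
  rw [sum_eq_LL_div a ν hν x, sum_eq_LL_div a ν hν (ν+1-x)]
  have key : LL a (x - 1/2) (-ν) x (ν+1) = - LL a ((ν+1-x) - 1/2) (-ν) (ν+1-x) (ν+1) := by
    rw [GP a (x - 1/2) (-ν) x (ν+1)]
    unfold LL
    rw [← Finset.sum_neg_distrib]
    apply Finset.sum_congr rfl
    intro j hj
    have hja : j ≤ a := Nat.lt_succ_iff.mp (Finset.mem_range.mp hj)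
    have e1 : (x - 1/2) + (-ν) = -((ν+1-x) - 1/2) := by ring
    have e2 : (ν + 1) - x = ν + 1 - x := by ring
    rw [e1, e2, neg_pow]
    have hsign : (-1:ℝ)^(a-j) = -(-1:ℝ)^j := by
      have h1 : (-1:ℝ)^(a-j) * (-1:ℝ)^j = -1 := by
        rw [← pow_add, Nat.sub_add_cancel hja]
        exact Odd.neg_one_pow ha
      have h2 : (-1:ℝ)^j * (-1:ℝ)^j = 1 := by
        rw [← pow_add]
        exact Even.neg_one_pow ⟨j, rfl⟩
      calc (-1:ℝ)^(a-j) = (-1:ℝ)^(a-j) * ((-1:ℝ)^j * (-1:ℝ)^j) := by rw [h2, mul_one]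
        _ = ((-1:ℝ)^(a-j) * (-1:ℝ)^j) * (-1:ℝ)^j := by ring
        _ = -(-1:ℝ)^j := by rw [h1]; ring
    rw [hsign]
    ring
  rw [key]
  ring

theorem stmt_9 (a : ℕ) (ha : Odd a) :
    (fun n : ℕ => ∑ j ∈ Finset.range (a + 1), ∑ i ∈ Finset.Icc 1 n,
        (1 / (n : ℝ) ^ a) * (a.choose j : ℝ) * (-1) ^ j * (n : ℝ) ^ j
          * ((i : ℝ) - 1 / 2) ^ (a - j) * risingFac (i : ℝ) j / risingFac ((n : ℝ) + 1) j)
      =O[atTop] (fun n : ℕ => 1 / (n : ℝ) ^ ((a - 1) / 2)) := by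
  have key : ∀ n : ℕ, (∑ j ∈ Finset.range (a + 1), ∑ i ∈ Finset.Icc 1 n,
        (1 / (n : ℝ) ^ a) * (a.choose j : ℝ) * (-1) ^ j * (n : ℝ) ^ j
          * ((i : ℝ) - 1 / 2) ^ (a - j) * risingFac (i : ℝ) j / risingFac ((n : ℝ) + 1) j) = 0 := by
    intro n
    set ν : ℝ := (n : ℝ) with hνdef
    have hν : 0 ≤ ν := Nat.cast_nonneg n
    set G : ℝ → ℝ := fun x => ∑ j ∈ Finset.range (a+1),
        (a.choose j : ℝ) * (-1)^j * ν^j * (x - 1/2)^(a-j) * risingFac x j / risingFac (ν+1) j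
      with hGdef
    rw [Finset.sum_comm]
    have step1 : ∀ i ∈ Finset.Icc 1 n, (∑ j ∈ Finset.range (a + 1),
        (1 / ν ^ a) * (a.choose j : ℝ) * (-1) ^ j * ν ^ j
          * ((i : ℝ) - 1 / 2) ^ (a - j) * risingFac (i : ℝ) j / risingFac (ν + 1) j)
        = (1 / ν ^ a) * G (i : ℝ) := by
      intro i _
      rw [hGdef]
      simp only
      rw [Finset.mul_sum]
      apply Finset.sum_congr rfl
      intro j _
      ring
    rw [Finset.sum_congr rfl step1, ← Finset.mul_sum]
    have step2 : ∑ i ∈ Finset.Icc 1 n, G (i : ℝ) = 0 := by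
      have hrefl : ∑ i ∈ Finset.Icc 1 n, G (i : ℝ)
          = ∑ i ∈ Finset.Icc 1 n, G ((n + 1 - i : ℕ) : ℝ) := by
        apply Finset.sum_nbij' (fun i => n + 1 - i) (fun i => n + 1 - i)
        · intro i hi
          simp only [Finset.mem_Icc] at hi ⊢
          omega
        · intro i hi
          simp only [Finset.mem_Icc] at hi ⊢
          omega
        · intro i hi
          simp only [Finset.mem_Icc] at hi
          omega
        · intro i hi
          simp only [Finset.mem_Icc] at hi
          omega
        · intro i hi
          simp only [Finset.mem_Icc] at hi
          have e : n + 1 - (n + 1 - i) = i := by omega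
          rw [e]
      have hanti : ∀ i ∈ Finset.Icc 1 n, G ((n + 1 - i : ℕ) : ℝ) = - G (i : ℝ) := by
        intro i hi
        simp only [Finset.mem_Icc] at hi
        have hcast : ((n + 1 - i : ℕ) : ℝ) = ν + 1 - (i : ℝ) := by
          rw [hνdef]
          push_cast [Nat.cast_sub (by omega : i ≤ n + 1)]
          ring
        rw [hcast]
        have := g_antisym a ha ν hν (i : ℝ)
        rw [hGdef]
        simp only
        linarith
      rw [Finset.sum_congr rfl hanti, Finset.sum_neg_distrib] at hrefl
      linarith
    rw [step2, mul_zero]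
  have : (fun n : ℕ => ∑ j ∈ Finset.range (a + 1), ∑ i ∈ Finset.Icc 1 n,
        (1 / (n : ℝ) ^ a) * (a.choose j : ℝ) * (-1) ^ j * (n : ℝ) ^ j
          * ((i : ℝ) - 1 / 2) ^ (a - j) * risingFac (i : ℝ) j / risingFac ((n : ℝ) + 1) j)
      = (fun _ : ℕ => (0:ℝ)) := funext key
  rw [this]
  exact isBigO_zero _ _
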